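/- arXiv:2505.13719 — 2 statements merged into one kernel-verified Lean document; each statement's English description precedes it below -/
import Mathlib

section
/- Let G ∈ 𝕊ⁿ be symmetric, X ∈ Δⁿ, ε ≥ 0, and set θ = max{−λ_min(G), 0}. Then −G belongs to the ε-normal cone N^ε_{Δⁿ}(X) if and only if ⟨G, X⟩ + θ ≤ ε. -/
open Matrix BigOperators Finset


lemma psd_trace_nonneg {n : ℕ} {M : Matrix (Fin n) (Fin n) ℝ} (hM : M.PosSemidef) :
    0 ≤ M.trace := by
  rw [Matrix.trace]
  refine Finset.sum_nonneg fun i _ => ?_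
  have := hM.dotProduct_mulVec_nonneg (Pi.single i 1)
  simpa [Matrix.mulVec_single, dotProduct, Pi.single_apply] using this

open scoped MatrixOrder in
lemma psd_mul_trace_nonneg {n : ℕ} {A B : Matrix (Fin n) (Fin n) ℝ}
    (hA : A.PosSemidef) (hB : B.PosSemidef) : 0 ≤ (A * B).trace := by
  have hA0 : 0 ≤ A := hA.nonneg
  have hS : (CFC.sqrt A)ᴴ = CFC.sqrt A := (CFC.sqrt_nonneg A).posSemidef.isHermitian
  have key : (CFC.sqrt A * B * (CFC.sqrt A)ᴴ).PosSemidef := hB.mul_mul_conjTranspose_same _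
  rw [hS] at key
  have h : (A * B).trace = (CFC.sqrt A * B * CFC.sqrt A).trace := by
    rw [Matrix.trace_mul_cycle, CFC.sqrt_mul_sqrt_self A]
  rw [h]
  exact psd_trace_nonneg key

lemma shift_psd {n : ℕ} {G : Matrix (Fin n) (Fin n) ℝ} (hG : G.IsHermitian) (θ : ℝ)
    (hθ : ∀ i, 0 ≤ hG.eigenvalues i + θ) : (G + θ • 1).PosSemidef := by
  have hU : (hG.eigenvectorUnitary : Matrix (Fin n) (Fin n) ℝ) *
      (star (hG.eigenvectorUnitary : Matrix (Fin n) (Fin n) ℝ)) = 1 :=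
    (Matrix.mem_unitaryGroup_iff).mp hG.eigenvectorUnitary.2
  have key : G + θ • 1 = (hG.eigenvectorUnitary : Matrix (Fin n) (Fin n) ℝ) *
      Matrix.diagonal (fun i => hG.eigenvalues i + θ) *
      (star (hG.eigenvectorUnitary : Matrix (Fin n) (Fin n) ℝ)) := by
    conv_lhs => rw [hG.spectral_theorem]
    have h1 : (θ • (1 : Matrix (Fin n) (Fin n) ℝ)) =
        (hG.eigenvectorUnitary : Matrix (Fin n) (Fin n) ℝ) * (θ • 1) *
        (star (hG.eigenvectorUnitary : Matrix (Fin n) (Fin n) ℝ)) := by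
      rw [mul_smul_comm, mul_one, smul_mul_assoc, hU]
    rw [Unitary.conjStarAlgAut_apply]
    rw [h1, ← Matrix.add_mul, ← Matrix.mul_add]
    congr 1
    congr 1
    ext i j
    by_cases h : i = j <;>
      simp [Matrix.diagonal, Matrix.one_apply, h, Function.comp, add_comm]
  rw [key]
  exact (Matrix.posSemidef_diagonal_iff.mpr fun i => hθ i).mul_mul_conjTranspose_same _

lemma rankone_psd {n : ℕ} (v : Fin n → ℝ) :
    (Matrix.of fun j k => v j * v k).PosSemidef := by
  refine Matrix.PosSemidef.of_dotProduct_mulVec_nonneg ?_ ?_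
  · ext j k
    simp [Matrix.conjTranspose_apply, mul_comm]
  · intro x
    have hmv : ∀ j, ((Matrix.of fun j k => v j * v k) *ᵥ x) j = v j * ∑ k, v k * x k := by
      intro j
      simp [Matrix.mulVec, dotProduct, Finset.mul_sum, mul_assoc]
    have hs : star x = x := by simp
    rw [hs]
    have : x ⬝ᵥ ((Matrix.of fun j k => v j * v k) *ᵥ x) = (∑ k, v k * x k) ^ 2 := by
      simp only [dotProduct, hmv]
      rw [pow_two, Finset.sum_mul]
      apply Finset.sum_congr rfl
      intro j _
      ring
    rw [this]
    positivity

lemma rankone_trace {n : ℕ} (v : Fin n → ℝ) :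
    (Matrix.of fun j k => v j * v k).trace = ∑ j, v j * v j := by
  simp [Matrix.trace, Matrix.diag]

lemma rankone_mul_trace {n : ℕ} (G : Matrix (Fin n) (Fin n) ℝ) (v : Fin n → ℝ) :
    (G * (Matrix.of fun j k => v j * v k)).trace = ∑ j, (G *ᵥ v) j * v j := by
  simp only [Matrix.trace, Matrix.diag, Matrix.mul_apply, Matrix.of_apply, Matrix.mulVec,
    dotProduct, Finset.sum_mul]
  apply Finset.sum_congr rfl
  intro j _
  apply Finset.sum_congr rfl
  intro k _
  ring

lemma eigvec_sq_sum {n : ℕ} {G : Matrix (Fin n) (Fin n) ℝ} (hG : G.IsHermitian) (i : Fin n) :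
    ∑ j, (hG.eigenvectorBasis i) j * (hG.eigenvectorBasis i) j = 1 := by
  have hnorm : ‖hG.eigenvectorBasis i‖ = 1 := hG.eigenvectorBasis.orthonormal.1 i
  have h2 : (inner ℝ (hG.eigenvectorBasis i) (hG.eigenvectorBasis i) : ℝ) = 1 := by
    rw [real_inner_self_eq_norm_sq, hnorm]; norm_num
  rw [← h2, PiLp.inner_apply]
  simp [PiLp.inner_apply, RCLike.inner_apply, mul_comm, pow_two]

/-- The spectraplex `Δⁿ = {X ∈ 𝕊ⁿ : Tr(X) ≤ 1, X ⪰ 0}`. -/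
def spectraplex (n : ℕ) : Set (Matrix (Fin n) (Fin n) ℝ) :=
  {X | X.trace ≤ 1 ∧ X.PosSemidef}

/-- Let `G ∈ 𝕊ⁿ`, `X ∈ Δⁿ`, `ε ≥ 0`, `θ = max{−λ_min(G), 0}`. Then
`−G ∈ N^ε_{Δⁿ}(X)` (i.e. `⟨−G, U − X⟩ ≤ ε` for all `U ∈ Δⁿ`, where `⟨A,B⟩ = Tr(AB)`)
if and only if `⟨G,X⟩ + θ ≤ ε`. -/
theorem neg_grad_in_eps_normal_cone_iff
    (n : ℕ) (hn : 0 < n)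
    (G : Matrix (Fin n) (Fin n) ℝ) (hG : G.IsHermitian)
    (X : Matrix (Fin n) (Fin n) ℝ) (hX : X ∈ spectraplex n)
    (ε : ℝ) (hε : 0 ≤ ε)
    (θ : ℝ) (hθ : θ = max (-(⨅ i, hG.eigenvalues i)) 0) :
    (∀ U ∈ spectraplex n, ((-G) * (U - X)).trace ≤ ε) ↔ (G * X).trace + θ ≤ ε := by
  haveI : Nonempty (Fin n) := ⟨⟨0, hn⟩⟩
  have hθ0 : 0 ≤ θ := hθ ▸ le_max_right _ _
  have htr : ∀ U : Matrix (Fin n) (Fin n) ℝ,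
      ((-G) * (U - X)).trace = (G * X).trace - (G * U).trace := by
    intro U
    rw [Matrix.mul_sub, Matrix.trace_sub, Matrix.neg_mul, Matrix.neg_mul,
      Matrix.trace_neg, Matrix.trace_neg]
    ring
  constructor
  · intro h
    by_cases hcase : (⨅ i, hG.eigenvalues i) < 0
    · obtain ⟨i, hi⟩ := exists_eq_ciInf_of_finite (f := hG.eigenvalues)
      set v : Fin n → ℝ := ⇑(hG.eigenvectorBasis i) with hv
      set U : Matrix (Fin n) (Fin n) ℝ := Matrix.of fun j k => v j * v k with hU
      have hsum : ∑ j, v j * v j = 1 := eigvec_sq_sum hG i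
      have hUmem : U ∈ spectraplex n := by
        refine ⟨?_, rankone_psd v⟩
        rw [hU, rankone_trace]
        exact le_of_eq hsum
      have hGU : (G * U).trace = ⨅ i, hG.eigenvalues i := by
        rw [hU, rankone_mul_trace]
        have hmv : G *ᵥ v = hG.eigenvalues i • v := hG.mulVec_eigenvectorBasis i
        rw [hmv]
        simp only [Pi.smul_apply, smul_eq_mul, mul_assoc]
        rw [← Finset.mul_sum, hsum, mul_one, hi]
      have := h U hUmem
      rw [htr U, hGU] at this
      have hθval : θ = -(⨅ i, hG.eigenvalues i) := by
        rw [hθ, max_eq_left (by linarith)]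
      linarith
    · have hθval : θ = 0 := by
        rw [hθ, max_eq_right (by linarith [not_lt.mp hcase])]
      have h0mem : (0 : Matrix (Fin n) (Fin n) ℝ) ∈ spectraplex n :=
        ⟨by simp, Matrix.PosSemidef.zero⟩
      have := h 0 h0mem
      rw [htr 0] at this
      simp only [Matrix.mul_zero, Matrix.trace_zero, sub_zero] at this
      linarith
  · intro h U hU
    have hbdd : BddBelow (Set.range hG.eigenvalues) := (Set.finite_range _).bddBelow
    have hshift : (G + θ • 1).PosSemidef := by
      refine shift_psd hG θ fun i => ?_
      have h1 : (⨅ i, hG.eigenvalues i) ≤ hG.eigenvalues i := ciInf_le hbdd i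
      have h2 : -(⨅ i, hG.eigenvalues i) ≤ θ := hθ ▸ le_max_left _ _
      linarith
    have hUt0 : 0 ≤ U.trace := psd_trace_nonneg hU.2
    have h0 : 0 ≤ ((G + θ • 1) * U).trace := psd_mul_trace_nonneg hshift hU.2
    have hexp : ((G + θ • 1) * U).trace = (G * U).trace + θ * U.trace := by
      rw [Matrix.add_mul, Matrix.trace_add, Matrix.smul_mul, Matrix.one_mul,
        Matrix.trace_smul]
      simp
    rw [hexp] at h0
    have : θ * U.trace ≤ θ := by
      calc θ * U.trace ≤ θ * 1 := mul_le_mul_of_nonneg_left hU.1 hθ0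
        _ = θ := mul_one θ
    rw [htr U]
    linarith
end

section
/- Approximate weak duality with primal infeasibility: let A₁,…,A_m ∈ 𝕊ⁿ be symmetric, C ∈ 𝕊ⁿ and b ∈ ℝ^m. If X ∈ Δⁿ (not necessarily satisfying 𝒜(X) = b) and (p, θ) ∈ ℝ^m × ℝ satisfies C + 𝒜*(p) + θI ⪰ 0 and θ ≥ 0, then ⟨C, X⟩ − (−bᵀp − θ) ≥ ⟨p, b − 𝒜(X)⟩ ≥ −‖p‖·‖𝒜(X) − b‖. -/
open Matrix BigOperators Finset

lemma psd_trace_nonneg_s8 {k : ℕ} {N : Matrix (Fin k) (Fin k) ℝ} (hN : N.PosSemidef) :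
    0 ≤ N.trace := by
  rw [Matrix.trace]
  apply Finset.sum_nonneg
  intro i _
  have := hN.2 (Finsupp.single i 1)
  simpa [dotProduct, Matrix.mulVec, Pi.single_apply] using this

lemma psd_trace_mul_nonneg {k : ℕ} {M X : Matrix (Fin k) (Fin k) ℝ}
    (hM : M.PosSemidef) (hX : X.PosSemidef) : 0 ≤ (M * X).trace := by
  obtain ⟨B, rfl⟩ : ∃ B : Matrix (Fin k) (Fin k) ℝ, X = Bᴴ * B := by
    open scoped MatrixOrder in
    obtain ⟨Y, hY, -, hXY⟩ := sub_zero X ▸ CFC.exists_sqrt_of_isSelfAdjoint_of_quasispectrumRestricts hX.isHermitian (QuasispectrumRestricts.nnreal_of_nonneg hX.nonneg)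
    have hYt : Yᴴ = Y := hY.star_eq
    exact ⟨Y, by rw [hYt, hXY, sub_zero]⟩
  have h1 : (M * (Bᴴ * B)).trace = (B * M * Bᴴ).trace := by
    rw [← Matrix.mul_assoc, Matrix.trace_mul_cycle]
  rw [h1]
  exact psd_trace_nonneg_s8 (hM.mul_mul_conjTranspose_same B)

/-- **approximate weak duality.** If `X ∈ Δⁿ` (not necessarily with
`𝒜(X) = b`) and `(p, θ)` satisfies `C + 𝒜*(p) + θI ⪰ 0` and `θ ≥ 0`, then
`⟨C,X⟩ − (−bᵀp − θ) ≥ ⟨p, b − 𝒜(X)⟩ ≥ −‖p‖ ‖𝒜(X) − b‖`. -/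
theorem approximate_weak_duality
    (n m : ℕ)
    (A : Fin m → Matrix (Fin n) (Fin n) ℝ) (hA : ∀ i, (A i).IsSymm)
    (C : Matrix (Fin n) (Fin n) ℝ) (hC : C.IsSymm)
    (b : Fin m → ℝ)
    (X : Matrix (Fin n) (Fin n) ℝ) (hX : X ∈ spectraplex n)
    (p : Fin m → ℝ) (θ : ℝ) (hθ : 0 ≤ θ)
    (hdual : (C + (∑ i, p i • A i) + θ • (1 : Matrix (Fin n) (Fin n) ℝ)).PosSemidef) :
    (C * X).trace - (-(∑ i, b i * p i) - θ) ≥ ∑ i, p i * (b i - (A i * X).trace) ∧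
    ∑ i, p i * (b i - (A i * X).trace) ≥
      -(Real.sqrt (∑ i, p i ^ 2) * Real.sqrt (∑ i, ((A i * X).trace - b i) ^ 2)) := by
  obtain ⟨htr, hXpsd⟩ := hX
  constructor
  · have h0 : 0 ≤ ((C + (∑ i, p i • A i) + θ • (1 : Matrix (Fin n) (Fin n) ℝ)) * X).trace :=
      psd_trace_mul_nonneg hdual hXpsd
    have hexp : ((C + (∑ i, p i • A i) + θ • (1 : Matrix (Fin n) (Fin n) ℝ)) * X).trace
        = (C * X).trace + (∑ i, p i * (A i * X).trace) + θ * X.trace := by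
      rw [Matrix.add_mul, Matrix.add_mul, Matrix.trace_add, Matrix.trace_add,
        Matrix.smul_mul, Matrix.one_mul, Matrix.trace_smul, Finset.sum_mul,
        Matrix.trace_sum]
      simp [Matrix.smul_mul, Matrix.trace_smul, smul_eq_mul]
    rw [hexp] at h0
    have hθtr : θ * X.trace ≤ θ := by nlinarith
    have hsum : ∑ i, p i * (b i - (A i * X).trace)
        = (∑ i, b i * p i) - ∑ i, p i * (A i * X).trace := by
      rw [← Finset.sum_sub_distrib]
      congr 1; ext i; ring
    rw [hsum]
    linarith
  · have hcs := Real.sum_mul_le_sqrt_mul_sqrt Finset.univ p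
      (fun i => (A i * X).trace - b i)
    have : ∑ i, p i * (b i - (A i * X).trace)
        = -(∑ i, p i * ((A i * X).trace - b i)) := by
      rw [← Finset.sum_neg_distrib]
      congr 1; ext i; ring
    rw [this]
    exact neg_le_neg hcs
end
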